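/- Let α, β be real numbers with 0 < β < α, and let (cₙ) be a sequence of real numbers with −1/2 < c₀ < 1 and cₙ₊₁ = (β + (α+β)cₙ)/(α + 2βcₙ) for all n. Then: (i) −1/2 < cₙ < 1 for all n; (ii) the sequence (cₙ) is strictly increasing; (iii) (cₙ) converges and its limit is 1; and therefore (iv) the sequence of angles φₙ = arccos cₙ converges to 0. -/

import Mathlib

theorem stmt_14 (α β : ℝ) (hβ : 0 < β) (hβα : β < α)
    (c : ℕ → ℝ) (hc0 : -1/2 < c 0) (hc0' : c 0 < 1)
    (hrec : ∀ n, c (n + 1) = (β + (α + β) * c n) / (α + 2 * β * c n)) :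
    (∀ n, -1/2 < c n ∧ c n < 1) ∧
    StrictMono c ∧
    Filter.Tendsto c Filter.atTop (nhds 1) ∧
    Filter.Tendsto (fun n => Real.arccos (c n)) Filter.atTop (nhds 0) := by
  have hb : ∀ n, -1/2 < c n ∧ c n < 1 := by
    intro n
    induction n with
    | zero => exact ⟨hc0, hc0'⟩
    | succ n ih =>
      obtain ⟨h1, h2⟩ := ih
      have hD : 0 < α + 2 * β * c n := by nlinarith
      rw [hrec]
      constructor
      · rw [lt_div_iff₀ hD]; nlinarith
      · rw [div_lt_one hD]; nlinarith
  have hD : ∀ n, 0 < α + 2 * β * c n := by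
    intro n; have := (hb n).1; nlinarith
  have hmono : StrictMono c := by
    apply strictMono_nat_of_lt_succ
    intro n
    obtain ⟨h1, h2⟩ := hb n
    rw [hrec, lt_div_iff₀ (hD n)]
    nlinarith [mul_pos (mul_pos hβ (show (0:ℝ) < 2 * c n + 1 by linarith)) (show (0:ℝ) < 1 - c n by linarith)]
  set r : ℝ := (α - β) / (α + 2 * β * c 0) with hr
  have hD0 : 0 < α + 2 * β * c 0 := hD 0
  have hr0 : 0 ≤ r := le_of_lt (div_pos (by linarith) hD0)
  have hr1 : r < 1 := by
    rw [hr, div_lt_one hD0]; nlinarith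
  have hkey : ∀ n, 1 - c n ≤ r ^ n * (1 - c 0) := by
    intro n
    induction n with
    | zero => simp
    | succ n ih =>
      have h0n : c 0 ≤ c n := hmono.monotone (Nat.zero_le n)
      obtain ⟨h1, h2⟩ := hb n
      have heq : 1 - c (n + 1) = (α - β) * (1 - c n) / (α + 2 * β * c n) := by
        rw [hrec, eq_div_iff (hD n).ne', sub_mul, div_mul_cancel₀ _ (hD n).ne']; ring
      have hstep : 1 - c (n + 1) ≤ r * (1 - c n) := by
        rw [heq, hr, div_mul_eq_mul_div, div_le_div_iff₀ (hD n) hD0]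
        nlinarith [mul_nonneg (mul_nonneg (mul_nonneg (show (0:ℝ) ≤ α - β by linarith) (show (0:ℝ) ≤ 1 - c n by linarith)) (show (0:ℝ) ≤ c n - c 0 by linarith)) (le_of_lt hβ)]
      calc 1 - c (n + 1) ≤ r * (1 - c n) := hstep
        _ ≤ r * (r ^ n * (1 - c 0)) := by
            apply mul_le_mul_of_nonneg_left ih hr0
        _ = r ^ (n + 1) * (1 - c 0) := by ring
  have htend : Filter.Tendsto c Filter.atTop (nhds 1) := by
    have hgeo : Filter.Tendsto (fun n => r ^ n * (1 - c 0)) Filter.atTop (nhds 0) := by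
      simpa using (tendsto_pow_atTop_nhds_zero_of_lt_one hr0 hr1).mul_const (1 - c 0)
    have hsq : Filter.Tendsto (fun n => 1 - c n) Filter.atTop (nhds 0) := by
      apply squeeze_zero (fun n => by linarith [(hb n).2]) hkey hgeo
    have := (tendsto_const_nhds (x := (1:ℝ)) (f := Filter.atTop)).sub hsq
    simpa using this
  refine ⟨hb, hmono, htend, ?_⟩
  have := (Real.continuous_arccos.tendsto 1).comp htend
  simpa [Real.arccos_one, Function.comp_def] using this
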